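/- In K = ℚ(ζ_{2^n}) with n ≥ 2, Tr_{K/ℚ}( (1/(1+ζ_{2^n})) · (1/(1+ζ_{2^n}^{-1})) ) = 2^{2n-4}. -/

import Mathlib

noncomputable section

/-- Total positivity: all complex embeddings take positive real values. -/
def totPos (K : Type*) [Field K] [NumberField K] (a : K) : Prop :=
  ∀ φ : K →+* ℂ, 0 < (φ a).re ∧ (φ a).im = 0

/-- The real value `Tr_{K/ℚ}(a·x·x̄) = ∑_φ φ(a)·|φ(x)|²` of the unary trace form at `x`. -/
def qform (K : Type*) [Field K] [NumberField K] (a x : K) : ℝ :=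
  ∑ φ : K →+* ℂ, (φ a).re * Complex.normSq (φ x)

/-- `μ(a)`: the infimum of the trace form over nonzero algebraic integers. -/
def muK (K : Type*) [Field K] [NumberField K] (a : K) : ℝ :=
  sInf { t | ∃ x : NumberField.RingOfIntegers K, x ≠ 0 ∧ t = qform K a (x : K) }

/-- `μ*(a)`: the infimum of the trace form over units. -/
def muStarK (K : Type*) [Field K] [NumberField K] (a : K) : ℝ :=
  sInf { t | ∃ u : (NumberField.RingOfIntegers K)ˣ,
    t = qform K a ((u : NumberField.RingOfIntegers K) : K) }

/-- A number field is unit reducible if `μ(a) = μ*(a)` for all totally positive `a`. -/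
def UnitReducible (K : Type*) [Field K] [NumberField K] : Prop :=
  ∀ a : K, totPos K a → muK K a = muStarK K a

/-- The reduction discrepancy `δ_K = sup_a μ*(a)/μ(a)`. -/
def deltaK (K : Type*) [Field K] [NumberField K] : ℝ :=
  sSup { t | ∃ a : K, totPos K a ∧ t = muStarK K a / muK K a }

open Polynomial Finset

lemma aux_trace_pow (nn : ℕ) (hn : 2 ≤ nn) (K : Type) [Field K] [Algebra ℚ K]
    [IsCyclotomicExtension {((2 : ℕ+) ^ nn : ℕ)} ℚ K]
    (ζ : K) (hζ : IsPrimitiveRoot ζ (((2:ℕ+) ^ nn : ℕ+) : ℕ))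
    (k : ℕ) (hk0 : 0 < k) (hk : k < 2 ^ (nn - 1)) :
    Algebra.trace ℚ K (ζ ^ k) = 0 := by
  set m : ℕ := 2 ^ (nn - 1) with hm
  have h2m : 2 * m = 2 ^ nn := by
    rw [hm, ← pow_succ']
    congr 1
    omega
  have hzm : ζ ^ m = -1 := by
    have hcoe : (((2:ℕ+) ^ nn : ℕ+) : ℕ) = 2 ^ nn := by push_cast; ring
    rw [hcoe] at hζ
    have := (hζ.pow (by positivity) (by omega : 2 ^ nn = m * 2))
    exact this.eq_neg_one_of_two_right
  haveI : IsCyclotomicExtension {(((2:ℕ+) ^ nn : ℕ+) : ℕ)} ℚ K := by rw [PNat.pow_coe]; infer_instance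
  set pb := hζ.powerBasis ℚ with hpb
  have hgen : pb.gen = ζ := hζ.powerBasis_gen ℚ
  have hdim : pb.dim = m := by
    have hirr := cyclotomic.irreducible_rat (n := ((2:ℕ+)^nn : ℕ+)) (by positivity)
    rw [hpb, IsPrimitiveRoot.powerBasis_dim, ← hζ.minpoly_eq_cyclotomic_of_irreducible hirr,
      natDegree_cyclotomic]
    have : (((2:ℕ+) ^ nn : ℕ+) : ℕ) = 2 ^ nn := by push_cast; ring
    rw [this, Nat.totient_prime_pow Nat.prime_two (by omega)]
    simp [hm]
  have hbas : ∀ r : Fin pb.dim, pb.basis r = ζ ^ (r : ℕ) := by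
    intro r; rw [pb.coe_basis, hgen]
  have hrep : ∀ (r : ℕ) (i : Fin pb.dim), r < m → r ≠ (i : ℕ) →
      pb.basis.repr (ζ ^ r) i = 0 := by
    intro r i hr hne
    have : ζ ^ r = pb.basis ⟨r, hdim ▸ hr⟩ := (hbas ⟨r, hdim ▸ hr⟩).symm
    rw [this, pb.basis.repr_self_apply, if_neg (by simpa [Fin.ext_iff] using hne)]
  rw [Algebra.trace_eq_matrix_trace pb.basis, Matrix.trace]
  apply Finset.sum_eq_zero
  intro i _
  have hi : (i : ℕ) < m := hdim ▸ i.2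
  rw [Matrix.diag_apply, Algebra.leftMulMatrix_eq_repr_mul, hbas, ← pow_add]
  rcases lt_or_ge (k + (i : ℕ)) m with h | h
  · exact hrep _ i h (by omega)
  · obtain ⟨r, hr⟩ : ∃ r, k + (i : ℕ) = m + r := ⟨k + (i:ℕ) - m, by omega⟩
    have hsplit : ζ ^ (k + (i : ℕ)) = -ζ ^ r := by
      rw [hr, pow_add, hzm, neg_one_mul]
    rw [hsplit, map_neg, Finsupp.neg_apply, hrep r i (by omega) (by omega), neg_zero]

/-- In `ℚ(ζ_{2^n})`, `Tr((1+ζ)⁻¹·(1+ζ⁻¹)⁻¹) = 2^{2n-4}`. -/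
theorem stmt8 (nn : ℕ) (hn : 2 ≤ nn) (K : Type) [Field K] [Algebra ℚ K]
    [IsCyclotomicExtension {((2 : ℕ+) ^ nn : ℕ)} ℚ K]
    (ζ : K) (hζ : IsPrimitiveRoot ζ (2 ^ nn)) :
    Algebra.trace ℚ K ((1 + ζ)⁻¹ * (1 + ζ⁻¹)⁻¹) = 2 ^ (2 * nn - 4) := by
  have hζ' : IsPrimitiveRoot ζ (((2:ℕ+) ^ nn : ℕ+) : ℕ) := by
    have : (((2:ℕ+) ^ nn : ℕ+) : ℕ) = 2 ^ nn := by push_cast; ring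
    rw [this]; exact hζ
  haveI : CharZero K := charZero_of_injective_algebraMap (algebraMap ℚ K).injective
  set m : ℕ := 2 ^ (nn - 1) with hm
  have hmpos : 0 < m := by positivity
  have hmeven : Even m := by
    refine ⟨2 ^ (nn - 2), ?_⟩
    rw [hm, ← two_mul, ← pow_succ']
    congr 1
    omega
  have h2m : 2 * m = 2 ^ nn := by rw [hm, ← pow_succ']; congr 1; omega
  have hzm : ζ ^ m = -1 := by
    have := (hζ.pow (by positivity) (by omega : 2 ^ nn = m * 2))
    exact this.eq_neg_one_of_two_right
  have hz0 : ζ ≠ 0 := by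
    intro h
    have := hζ.pow_eq_one
    rw [h, zero_pow (by positivity)] at this
    exact zero_ne_one this
  -- finrank
  haveI : IsCyclotomicExtension {(((2:ℕ+) ^ nn : ℕ+) : ℕ)} ℚ K := by rw [PNat.pow_coe]; infer_instance
  set pb := hζ'.powerBasis ℚ with hpb
  have hdim : pb.dim = m := by
    have hirr := cyclotomic.irreducible_rat (n := ((2:ℕ+)^nn : ℕ+)) (by positivity)
    rw [hpb, IsPrimitiveRoot.powerBasis_dim, ← hζ'.minpoly_eq_cyclotomic_of_irreducible hirr,
      natDegree_cyclotomic]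
    have : (((2:ℕ+) ^ nn : ℕ+) : ℕ) = 2 ^ nn := by push_cast; ring
    rw [this, Nat.totient_prime_pow Nat.prime_two (by omega)]
    simp [hm]
  have hfin : Module.finrank ℚ K = m := by rw [pb.finrank, hdim]
  haveI : Module.Finite ℚ K := Module.Finite.of_basis pb.basis
  -- trace of -1
  have htrneg : Algebra.trace ℚ K (-1) = -(m : ℚ) := by
    have : (-1 : K) = algebraMap ℚ K (-1) := by simp
    rw [this, Algebra.trace_algebraMap, hfin]
    simp
  -- trace of ζ^k, 0 < k < 2m, k ≠ m
  have htr : ∀ k : ℕ, 0 < k → k < 2 * m → k ≠ m → Algebra.trace ℚ K (ζ ^ k) = 0 := by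
    intro k hk0 hk2 hkm
    rcases lt_or_ge k m with h | h
    · exact aux_trace_pow nn hn K ζ hζ' k hk0 h
    · obtain ⟨r, hr⟩ : ∃ r, k = m + r := ⟨k - m, by omega⟩
      have : ζ ^ k = -ζ ^ r := by rw [hr, pow_add, hzm, neg_one_mul]
      rw [this, map_neg, aux_trace_pow nn hn K ζ hζ' r (by omega) (by omega), neg_zero]
  -- the sum S with (1+ζ) * S = 2
  set S : K := ∑ i ∈ range m, (-ζ) ^ i with hS
  have hSmul : (1 + ζ) * S = 2 := by
    have h1 := geom_sum_mul (-ζ) m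
    have h2 : (-ζ) ^ m = -1 := by rw [hmeven.neg_pow, hzm]
    rw [h2] at h1
    linear_combination -h1
  have h1z : (1 : K) + ζ ≠ 0 := by
    intro h
    rw [h, zero_mul] at hSmul
    exact two_ne_zero hSmul.symm
  have hinv1 : (1 + ζ)⁻¹ = (2:K)⁻¹ * S := by
    apply inv_eq_of_mul_eq_one_right
    rw [mul_comm ((2:K)⁻¹) S, ← mul_assoc, hSmul]
    exact mul_inv_cancel₀ two_ne_zero
  have hinv2 : (1 + ζ⁻¹)⁻¹ = (2:K)⁻¹ * S * ζ := by
    have : (1 : K) + ζ⁻¹ = ζ⁻¹ * (1 + ζ) := by field_simp; ring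
    rw [this, mul_inv, inv_inv, ← hinv1]
    ring
  -- rewrite the element as a rational multiple of S * S * ζ
  have helt : (1 + ζ)⁻¹ * (1 + ζ⁻¹)⁻¹ = ((4:ℚ)⁻¹) • (S * S * ζ) := by
    rw [hinv1, hinv2, Algebra.smul_def]
    have : algebraMap ℚ K (4:ℚ)⁻¹ = (4:K)⁻¹ := by
      rw [map_inv₀]; norm_num
    rw [this]
    have h4 : (4:K) = 2 * 2 := by norm_num
    field_simp
    ring
  rw [helt, map_smul]
  -- expand S * S * ζ as a double sum
  have hexp : S * S * ζ = ∑ i ∈ range m, ∑ j ∈ range m,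
      ((-1:ℚ)^(i+j)) • ζ ^ (i + j + 1) := by
    rw [hS, Finset.sum_mul_sum, Finset.sum_mul]
    apply Finset.sum_congr rfl
    intro i _
    rw [Finset.sum_mul]
    apply Finset.sum_congr rfl
    intro j _
    rw [Algebra.smul_def, map_pow, map_neg, map_one]
    rw [neg_pow ζ i, neg_pow ζ j]
    ring
  rw [hexp, map_sum]
  have hinner : ∀ i ∈ range m,
      (Algebra.trace ℚ K) (∑ j ∈ range m, ((-1:ℚ)^(i+j)) • ζ ^ (i + j + 1)) = m := by
    intro i hi
    rw [Finset.mem_range] at hi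
    rw [map_sum]
    rw [Finset.sum_eq_single_of_mem (m - 1 - i) (Finset.mem_range.mpr (by omega))]
    · have hij : i + (m - 1 - i) + 1 = m := by omega
      rw [map_smul, hij, hzm, htrneg]
      have hsgn : ((-1:ℚ))^(i + (m-1-i)) = -1 := by
        rw [show i + (m-1-i) = m - 1 by omega]
        apply Odd.neg_one_pow
        rcases hmeven with ⟨t, ht⟩
        exact ⟨t - 1, by omega⟩
      rw [hsgn, smul_eq_mul]
      ring
    · intro j hj hne
      rw [Finset.mem_range] at hj
      rw [map_smul, htr (i + j + 1) (by omega) (by omega) (by omega), smul_zero]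
  rw [Finset.sum_congr rfl hinner, Finset.sum_const, Finset.card_range]
  -- final arithmetic
  rw [nsmul_eq_mul]
  have : (m:ℚ) * m = 4 * 2 ^ (2 * nn - 4) := by
    have : (m:ℚ) = 2 ^ (nn - 1) := by rw [hm]; push_cast; ring
    rw [this, ← pow_add, show (nn-1) + (nn-1) = 2 + (2*nn - 4) by omega, pow_add]
    norm_num
  rw [this, smul_eq_mul]
  ring
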